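/- arXiv:1811.02262 — 2 statements merged into one kernel-verified Lean document; each statement's English description precedes it below -/
import Mathlib

section
/- Let H be a complex separable infinite-dimensional Hilbert space and T a bounded linear operator on H. If T is Cesàro-hypercyclic, then the Hilbert-space adjoint T* satisfies Weyl's theorem, i.e. σ(T*) \ σ_w(T*) = π₀₀(T*). -/
open Filter Topology

noncomputable section

variable {E : Type*} [NormedAddCommGroup E] [NormedSpace ℂ E]

/-- `T` is Cesàro-hypercyclic: some orbit `{n⁻¹ Tⁿ x : n ≥ 1}` is dense. -/
def CesaroHypercyclic (T : E →L[ℂ] E) : Prop :=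
  ∃ x : E, Dense {y : E | ∃ n : ℕ, 1 ≤ n ∧ y = ((n : ℂ))⁻¹ • (T ^ n) x}

/-- `S` is upper semi-Fredholm: closed range and finite-dimensional kernel. -/
def IsUpperSemiFredholm (S : E →L[ℂ] E) : Prop :=
  IsClosed (LinearMap.range (S : E →ₗ[ℂ] E) : Set E) ∧ FiniteDimensional ℂ (LinearMap.ker (S : E →ₗ[ℂ] E))

/-- `S` is lower semi-Fredholm: closed range of finite codimension. -/
def IsLowerSemiFredholm (S : E →L[ℂ] E) : Prop :=
  IsClosed (LinearMap.range (S : E →ₗ[ℂ] E) : Set E) ∧ FiniteDimensional ℂ (E ⧸ LinearMap.range (S : E →ₗ[ℂ] E))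

/-- `S` is semi-Fredholm. -/
def IsSemiFredholm (S : E →L[ℂ] E) : Prop :=
  IsUpperSemiFredholm S ∨ IsLowerSemiFredholm S

/-- `S` is Fredholm. -/
def IsFredholm (S : E →L[ℂ] E) : Prop :=
  IsUpperSemiFredholm S ∧ IsLowerSemiFredholm S

/-- The index of a semi-Fredholm operator `S` is `≤ 0`:
`dim ker S ≤ codim ran S` (as cardinals, so that an infinite codimension is allowed). -/
def IndexLE0 (S : E →L[ℂ] E) : Prop :=
  Module.rank ℂ (LinearMap.ker (S : E →ₗ[ℂ] E)) ≤ Module.rank ℂ (E ⧸ LinearMap.range (S : E →ₗ[ℂ] E))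

/-- The index of a semi-Fredholm operator `S` is `≥ 0`:
`codim ran S ≤ dim ker S` (as cardinals, so that an infinite kernel is allowed). -/
def IndexGE0 (S : E →L[ℂ] E) : Prop :=
  Module.rank ℂ (E ⧸ LinearMap.range (S : E →ₗ[ℂ] E)) ≤ Module.rank ℂ (LinearMap.ker (S : E →ₗ[ℂ] E))

/-- `S` is Weyl: Fredholm of index zero. -/
def IsWeyl (S : E →L[ℂ] E) : Prop :=
  IsFredholm S ∧ Module.rank ℂ (LinearMap.ker (S : E →ₗ[ℂ] E)) = Module.rank ℂ (E ⧸ LinearMap.range (S : E →ₗ[ℂ] E))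

/-- `S` has finite ascent: the kernels of its powers stabilize. -/
def HasFiniteAscent (S : E →L[ℂ] E) : Prop :=
  ∃ n : ℕ, LinearMap.ker ((S ^ n : E →L[ℂ] E) : E →ₗ[ℂ] E) = LinearMap.ker ((S ^ (n + 1) : E →L[ℂ] E) : E →ₗ[ℂ] E)

/-- `S` has finite descent: the ranges of its powers stabilize. -/
def HasFiniteDescent (S : E →L[ℂ] E) : Prop :=
  ∃ n : ℕ, LinearMap.range ((S ^ n : E →L[ℂ] E) : E →ₗ[ℂ] E) = LinearMap.range ((S ^ (n + 1) : E →L[ℂ] E) : E →ₗ[ℂ] E)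

/-- `S` is Browder: Fredholm with finite ascent and finite descent. -/
def IsBrowder (S : E →L[ℂ] E) : Prop :=
  IsFredholm S ∧ HasFiniteAscent S ∧ HasFiniteDescent S

/-- `S` is bounded below. -/
def IsBoundedBelow (S : E →L[ℂ] E) : Prop :=
  ∃ c > (0 : ℝ), ∀ x : E, c * ‖x‖ ≤ ‖S x‖

/-- The Weyl spectrum `σ_w(T)`. -/
def weylSpectrum (T : E →L[ℂ] E) : Set ℂ :=
  {lam : ℂ | ¬ IsWeyl (T - lam • 1)}

/-- The Browder spectrum `σ_b(T)`. -/
def browderSpectrum (T : E →L[ℂ] E) : Set ℂ :=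
  {lam : ℂ | ¬ IsBrowder (T - lam • 1)}

/-- The approximate point spectrum `σ_a(T)`. -/
def approxSpectrum (T : E →L[ℂ] E) : Set ℂ :=
  {lam : ℂ | ¬ IsBoundedBelow (T - lam • 1)}

/-- The essential approximate point spectrum `σ_ea(T)`. -/
def essApproxSpectrum (T : E →L[ℂ] E) : Set ℂ :=
  {lam : ℂ | ¬ (IsUpperSemiFredholm (T - lam • 1) ∧ IndexLE0 (T - lam • 1))}

/-- The Browder essential approximate point spectrum `σ_ab(T)`. -/
def browderEssApproxSpectrum (T : E →L[ℂ] E) : Set ℂ :=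
  {lam : ℂ | ¬ (IsUpperSemiFredholm (T - lam • 1) ∧ IndexLE0 (T - lam • 1) ∧
    HasFiniteAscent (T - lam • 1))}

/-- `lam` is an isolated point of the set `s`. -/
def IsIsolatedPointOf (s : Set ℂ) (lam : ℂ) : Prop :=
  lam ∈ s ∧ ∃ ε > (0 : ℝ), ∀ mu ∈ s, ‖mu - lam‖ < ε → mu = lam

/-- `π₀₀(T)`: isolated points of the spectrum which are eigenvalues of finite multiplicity. -/
def pi00 (T : E →L[ℂ] E) : Set ℂ :=
  {lam : ℂ | IsIsolatedPointOf (spectrum ℂ T) lam ∧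
    LinearMap.ker ((T - lam • 1 : E →L[ℂ] E) : E →ₗ[ℂ] E) ≠ ⊥ ∧ FiniteDimensional ℂ (LinearMap.ker ((T - lam • 1 : E →L[ℂ] E) : E →ₗ[ℂ] E))}

/-- `π₀₀ᵃ(T)`: isolated points of the approximate point spectrum which are eigenvalues of
finite multiplicity. -/
def pi00a (T : E →L[ℂ] E) : Set ℂ :=
  {lam : ℂ | IsIsolatedPointOf (approxSpectrum T) lam ∧
    LinearMap.ker ((T - lam • 1 : E →L[ℂ] E) : E →ₗ[ℂ] E) ≠ ⊥ ∧ FiniteDimensional ℂ (LinearMap.ker ((T - lam • 1 : E →L[ℂ] E) : E →ₗ[ℂ] E))}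

/-- Weyl's theorem holds for `T`: `σ(T) \ σ_w(T) = π₀₀(T)`. -/
def WeylsTheorem (T : E →L[ℂ] E) : Prop :=
  spectrum ℂ T \ weylSpectrum T = pi00 T

/-- a-Weyl's theorem holds for `T`: `σ_a(T) \ σ_ea(T) = π₀₀ᵃ(T)`. -/
def AWeylsTheorem (T : E →L[ℂ] E) : Prop :=
  approxSpectrum T \ essApproxSpectrum T = pi00a T

/-- a-Browder's theorem holds for `T`: `σ_ea(T) = σ_ab(T)`. -/
def ABrowdersTheorem (T : E →L[ℂ] E) : Prop :=
  essApproxSpectrum T = browderEssApproxSpectrum T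

/-- The unit circle `∂D = {z : ‖z‖ = 1}`. -/
def unitCircleSet : Set ℂ := {z : ℂ | ‖z‖ = 1}

/-- Restriction of a continuous linear map to an invariant submodule. -/
def clmRestrict (S : E →L[ℂ] E) (M : Submodule ℂ E) (h : ∀ x ∈ M, S x ∈ M) : M →L[ℂ] M :=
  ⟨(S : E →ₗ[ℂ] E).restrict h,
    Continuous.subtype_mk (S.continuous.comp continuous_subtype_val) _⟩

/-- `S` is generalized upper semi-Fredholm: `E = M ⊕ N` for closed `S`-invariant
subspaces `M`, `N` with `S|_M` upper semi-Fredholm of index `≤ 0` and `S|_N`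
quasinilpotent. -/
def IsGeneralizedUpperSemiFredholm (S : E →L[ℂ] E) : Prop :=
  ∃ (M N : Submodule ℂ E), IsClosed (M : Set E) ∧ IsClosed (N : Set E) ∧ IsCompl M N ∧
    ∃ (hM : ∀ x ∈ M, S x ∈ M) (hN : ∀ x ∈ N, S x ∈ N),
      IsUpperSemiFredholm (clmRestrict S M hM) ∧ IndexLE0 (clmRestrict S M hM) ∧
      spectrum ℂ (clmRestrict S N hN) = {0}

/-- `σ₁(T)`: the complement of the set of `lam` around which `T - mu` is generalized
upper semi-Fredholm for all `mu ≠ lam` close enough to `lam`. -/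
def sigma1 (T : E →L[ℂ] E) : Set ℂ :=
  {lam : ℂ | ¬ ∃ ε > (0 : ℝ), ∀ mu : ℂ, 0 < ‖mu - lam‖ → ‖mu - lam‖ < ε →
    IsGeneralizedUpperSemiFredholm (T - mu • 1)}

end

variable {H : Type*} [NormedAddCommGroup H] [InnerProductSpace ℂ H] [CompleteSpace H]
  [TopologicalSpace.SeparableSpace H]

/-- The set `{n⁻¹ μⁿ c : n ≥ 1}` is never dense in `ℂ`. -/
lemma aux_not_dense (μ c : ℂ) :
    ¬ Dense {z : ℂ | ∃ n : ℕ, 1 ≤ n ∧ z = ((n : ℂ))⁻¹ * μ ^ n * c} := by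
  intro hd
  have hnorm : ∀ n : ℕ, 1 ≤ n → ‖((n : ℂ))⁻¹ * μ ^ n * c‖ = (n : ℝ)⁻¹ * ‖μ‖ ^ n * ‖c‖ := by
    intro n hn
    simp [norm_mul, norm_inv, norm_pow]
  by_cases hμ : ‖μ‖ ≤ 1 ∨ c = 0
  · have hbd : ∀ z ∈ {z : ℂ | ∃ n : ℕ, 1 ≤ n ∧ z = ((n : ℂ))⁻¹ * μ ^ n * c}, ‖z‖ ≤ ‖c‖ := by
      rintro z ⟨n, hn, rfl⟩
      rw [hnorm n hn]
      rcases hμ with hμ | rfl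
      · have h1 : (n : ℝ)⁻¹ ≤ 1 := by
          rw [inv_le_one_iff₀]; right; exact_mod_cast hn
        have h2 : ‖μ‖ ^ n ≤ 1 := pow_le_one₀ (norm_nonneg μ) hμ
        calc (n : ℝ)⁻¹ * ‖μ‖ ^ n * ‖c‖ ≤ 1 * 1 * ‖c‖ := by
              apply mul_le_mul (mul_le_mul h1 h2 (by positivity) (by norm_num)) le_rfl
                (norm_nonneg c) (by norm_num)
          _ = ‖c‖ := by ring
      · simp
    obtain ⟨z, hz, hdz⟩ := Metric.mem_closure_iff.mp
      (hd ((‖c‖ + 1 : ℝ) : ℂ)) (1 / 2) (by norm_num)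
    have h1 : ‖((‖c‖ + 1 : ℝ) : ℂ)‖ = ‖c‖ + 1 := by
      rw [Complex.norm_real, Real.norm_of_nonneg (by positivity)]
    have h2 : ‖((‖c‖ + 1 : ℝ) : ℂ)‖ ≤ dist ((‖c‖ + 1 : ℝ) : ℂ) z + ‖z‖ := by
      rw [dist_eq_norm]
      calc ‖((‖c‖ + 1 : ℝ) : ℂ)‖ = ‖(((‖c‖ + 1 : ℝ) : ℂ) - z) + z‖ := by ring_nf
        _ ≤ _ := norm_add_le _ _
    have := hbd z hz
    linarith [h1 ▸ h2]
  · push_neg at hμ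
    obtain ⟨h1, hc⟩ := hμ
    set δ := ‖μ‖ - 1 with hδ
    have hδ0 : 0 < δ := by rw [hδ]; linarith
    have hc0 : 0 < ‖c‖ := norm_pos_iff.mpr hc
    have hlow : ∀ z ∈ {z : ℂ | ∃ n : ℕ, 1 ≤ n ∧ z = ((n : ℂ))⁻¹ * μ ^ n * c},
        δ * ‖c‖ ≤ ‖z‖ := by
      rintro z ⟨n, hn, rfl⟩
      rw [hnorm n hn]
      have hn0 : (0 : ℝ) < n := by exact_mod_cast hn
      have hpow : (n : ℝ) * δ ≤ ‖μ‖ ^ n := by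
        have := one_add_mul_le_pow (a := δ) (by linarith) n
        have hμn : (1 + δ) ^ n = ‖μ‖ ^ n := by rw [hδ]; ring_nf
        nlinarith
      have : δ ≤ (n : ℝ)⁻¹ * ‖μ‖ ^ n := by
        have h2 := mul_le_mul_of_nonneg_left hpow (le_of_lt (inv_pos.mpr hn0))
        calc δ = (n : ℝ)⁻¹ * ((n : ℝ) * δ) := by field_simp
          _ ≤ (n : ℝ)⁻¹ * ‖μ‖ ^ n := h2
      nlinarith
    obtain ⟨z, hz, hdz⟩ := Metric.mem_closure_iff.mp (hd 0) (δ * ‖c‖) (by positivity)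
    rw [dist_comm, dist_zero_right] at hdz
    exact absurd (hlow z hz) (not_le.mpr hdz)

open ContinuousLinearMap in
/-- The adjoint of a Cesàro-hypercyclic operator has no eigenvalues. -/
lemma cesaro_adjoint_ker_eq_bot {H : Type*} [NormedAddCommGroup H] [InnerProductSpace ℂ H]
    [CompleteSpace H] (T : H →L[ℂ] H) (hT : CesaroHypercyclic T) (lam : ℂ) :
    LinearMap.ker ((ContinuousLinearMap.adjoint T - lam • 1 : H →L[ℂ] H) : H →ₗ[ℂ] H) = ⊥ := by
  rw [Submodule.eq_bot_iff]
  intro v hv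
  by_contra hvne
  have hev : ContinuousLinearMap.adjoint T v = lam • v := by
    have h0 : (ContinuousLinearMap.adjoint T - lam • 1) v = 0 := hv
    rw [ContinuousLinearMap.sub_apply, ContinuousLinearMap.smul_apply,
      ContinuousLinearMap.one_apply, sub_eq_zero] at h0
    exact h0
  obtain ⟨x, hx⟩ := hT
  set c : ℂ := inner ℂ v x with hc
  set μ : ℂ := (starRingEnd ℂ) lam with hμ
  have key : ∀ n : ℕ, (inner ℂ v ((T ^ n) x) : ℂ) = μ ^ n * c := by
    intro n
    induction n with
    | zero => simp [hc]
    | succ n ih =>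
      have : (T ^ (n + 1)) x = T ((T ^ n) x) := by
        rw [pow_succ']; rfl
      rw [this, ← ContinuousLinearMap.adjoint_inner_left, hev, inner_smul_left, ih]
      ring
  -- the image of the dense Cesàro orbit under ⟪v, ·⟫ is dense
  have hsurj : Function.Surjective (innerSL ℂ v) := by
    intro z
    refine ⟨(z / ((‖v‖ : ℂ) ^ 2)) • v, ?_⟩
    rw [innerSL_apply_apply, inner_smul_right, inner_self_eq_norm_sq_to_K]
    have : ((‖v‖ : ℂ)) ^ 2 ≠ 0 :=
      pow_ne_zero 2 (Complex.ofReal_ne_zero.mpr (norm_ne_zero_iff.mpr hvne))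
    field_simp
    exact mul_div_cancel_right₀ z this
  have hdense : Dense ((innerSL ℂ v) ''
      {y : H | ∃ n : ℕ, 1 ≤ n ∧ y = ((n : ℂ))⁻¹ • (T ^ n) x}) :=
    hsurj.denseRange.dense_image (innerSL ℂ v).continuous hx
  have hsub : ((innerSL ℂ v) '' {y : H | ∃ n : ℕ, 1 ≤ n ∧ y = ((n : ℂ))⁻¹ • (T ^ n) x}) ⊆
      {z : ℂ | ∃ n : ℕ, 1 ≤ n ∧ z = ((n : ℂ))⁻¹ * μ ^ n * c} := by
    rintro z ⟨y, ⟨n, hn, rfl⟩, rfl⟩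
    refine ⟨n, hn, ?_⟩
    rw [innerSL_apply_apply, inner_smul_right, key n]
    ring
  exact aux_not_dense μ c (hdense.mono hsub)

theorem cesaroHypercyclic_adjoint_weylsTheorem
    (hinf : ¬ FiniteDimensional ℂ H) (T : H →L[ℂ] H) (hT : CesaroHypercyclic T) :
    spectrum ℂ (ContinuousLinearMap.adjoint T) \
        weylSpectrum (ContinuousLinearMap.adjoint T) =
      pi00 (ContinuousLinearMap.adjoint T) := by
  have hker : ∀ lam : ℂ,
      LinearMap.ker ((ContinuousLinearMap.adjoint T - lam • 1 : H →L[ℂ] H) : H →ₗ[ℂ] H) = ⊥ :=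
    cesaro_adjoint_ker_eq_bot T hT
  ext lam
  simp only [Set.mem_diff, Set.mem_setOf_eq, pi00, weylSpectrum]
  constructor
  · rintro ⟨hspec, hw⟩
    exfalso
    rw [not_not] at hw
    obtain ⟨hfred, hrank⟩ := hw
    set S := ContinuousLinearMap.adjoint T - lam • 1 with hS
    have h0 : Module.rank ℂ (LinearMap.ker (S : H →ₗ[ℂ] H)) = 0 := by
      rw [hker lam]
      exact rank_bot ℂ H
    have hq : Subsingleton (H ⧸ LinearMap.range (S : H →ₗ[ℂ] H)) :=
      rank_zero_iff.mp (h0 ▸ hrank.symm)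
    have htop : LinearMap.range (S : H →ₗ[ℂ] H) = ⊤ :=
      Submodule.Quotient.subsingleton_iff.mp hq
    let e := ContinuousLinearEquiv.ofBijective S (hker lam) htop
    have hunit : IsUnit S := by
      refine ⟨⟨S, e.symm.toContinuousLinearMap, ?_, ?_⟩, rfl⟩
      · ext y
        exact e.apply_symm_apply y
      · ext y
        exact e.symm_apply_apply y
    apply spectrum.notMem_iff.mpr _ hspec
    have heq : algebraMap ℂ (H →L[ℂ] H) lam - ContinuousLinearMap.adjoint T = -S := by
      rw [hS, Algebra.algebraMap_eq_smul_one, neg_sub]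
    rw [heq]
    exact hunit.neg
  · rintro ⟨_, hne, _⟩
    exact absurd (hker lam) hne
end

section
/- Let H be a complex separable infinite-dimensional Hilbert space and T a bounded linear operator on H. If T is Cesàro-hypercyclic and π₀₀(T) ⊆ π₀₀(T*), then T satisfies a-Weyl's theorem, i.e. σ_a(T) \ σ_ea(T) = π₀₀ᵃ(T). -/
open Filter Topology

section AuxCesaro

open Filter Topology

private lemma not_dense_of_bounded' (f : ℕ → ℂ) (B : ℝ) (hB : ∀ n : ℕ, 1 ≤ n → ‖f n‖ ≤ B) :
    ¬ Dense {y : ℂ | ∃ n : ℕ, 1 ≤ n ∧ y = f n} := by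
  intro hd
  have hB0 : 0 ≤ B := le_trans (norm_nonneg _) (hB 1 le_rfl)
  have hsub : {y : ℂ | ∃ n : ℕ, 1 ≤ n ∧ y = f n} ⊆ Metric.closedBall 0 B := by
    rintro y ⟨n, hn, rfl⟩
    simpa [Metric.mem_closedBall, dist_eq_norm] using hB n hn
  have hmem : ((B + 1 : ℝ) : ℂ) ∈ Metric.closedBall (0:ℂ) B :=
    (closure_minimal hsub Metric.isClosed_closedBall) (hd _)
  rw [Metric.mem_closedBall, dist_zero_right, Complex.norm_real, Real.norm_eq_abs,
    abs_of_nonneg (by linarith)] at hmem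
  linarith

private lemma not_dense_of_tendsto' (f : ℕ → ℂ)
    (hf : Tendsto (fun n => ‖f n‖) atTop atTop) :
    ¬ Dense {y : ℂ | ∃ n : ℕ, 1 ≤ n ∧ y = f n} := by
  intro hd
  set S := {y : ℂ | ∃ n : ℕ, 1 ≤ n ∧ y = f n} with hS
  have hScount : S.Countable := by
    apply Set.Countable.mono _ (Set.countable_range f)
    rintro y ⟨n, _, rfl⟩; exact ⟨n, rfl⟩
  have : Uncountable ℂ := Complex.ofReal_injective.uncountable
  obtain ⟨w, hw⟩ : ∃ w : ℂ, w ∉ S := by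
    by_contra h
    push_neg at h
    exact Set.not_countable_univ (hScount.mono fun z _ => h z)
  have hfin : (S ∩ Metric.closedBall w 1).Finite := by
    obtain ⟨N, hN⟩ := Filter.eventually_atTop.mp (hf.eventually_gt_atTop (‖w‖ + 1))
    apply Set.Finite.subset ((Set.finite_Iio N).image f)
    rintro y ⟨⟨n, hn, rfl⟩, hball⟩
    refine ⟨n, ?_, rfl⟩
    by_contra hcon
    have h1 : ‖f n‖ ≤ ‖w‖ + 1 := by
      have : dist (f n) w ≤ 1 := Metric.mem_closedBall.mp hball
      calc ‖f n‖ = ‖f n - w + w‖ := by ring_nf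
        _ ≤ ‖f n - w‖ + ‖w‖ := norm_add_le _ _
        _ ≤ 1 + ‖w‖ := by rw [← dist_eq_norm] at *; linarith
        _ = ‖w‖ + 1 := by ring
    exact absurd h1 (not_le.mpr (hN n (le_of_not_gt (fun hlt => hcon (Set.mem_Iio.mpr hlt)))))
  have hKclosed : IsClosed (S ∩ Metric.closedBall w 1) := hfin.isClosed
  have hwK : w ∈ (S ∩ Metric.closedBall w 1)ᶜ := fun h => hw h.1
  obtain ⟨ε, hε, hball⟩ := Metric.isOpen_iff.mp hKclosed.isOpen_compl w hwK
  obtain ⟨y, hy⟩ := Metric.dense_iff.mp hd w (min ε 1) (lt_min hε one_pos)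
  have hyS : y ∈ S := hy.2
  have hyb : y ∈ Metric.ball w (min ε 1) := hy.1
  have h1 : dist y w < 1 := lt_of_lt_of_le (Metric.mem_ball.mp hyb) (min_le_right _ _)
  have h2 : dist y w < ε := lt_of_lt_of_le (Metric.mem_ball.mp hyb) (min_le_left _ _)
  exact hball (Metric.mem_ball.mpr h2) ⟨hyS, Metric.mem_closedBall.mpr h1.le⟩

private lemma not_dense_orbit' (a c : ℂ) :
    ¬ Dense {y : ℂ | ∃ n : ℕ, 1 ≤ n ∧ y = ((n : ℂ))⁻¹ * a ^ n * c} := by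
  set f : ℕ → ℂ := fun n => ((n : ℂ))⁻¹ * a ^ n * c with hfdef
  show ¬ Dense {y : ℂ | ∃ n : ℕ, 1 ≤ n ∧ y = f n}
  by_cases hc : c = 0
  · exact not_dense_of_bounded' f 0 (fun n hn => by simp [hfdef, hc])
  by_cases ha : ‖a‖ ≤ 1
  · apply not_dense_of_bounded' f ‖c‖
    intro n hn
    have hn1 : (1:ℝ) ≤ (n:ℝ) := by exact_mod_cast hn
    have h1 : ‖((n:ℂ))⁻¹‖ ≤ 1 := by
      rw [norm_inv, Complex.norm_natCast]
      exact inv_le_one_of_one_le₀ hn1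
    have h2 : ‖a ^ n‖ ≤ 1 := by
      rw [norm_pow]; exact pow_le_one₀ (norm_nonneg a) ha
    calc ‖f n‖ = ‖((n:ℂ))⁻¹‖ * ‖a ^ n‖ * ‖c‖ := by simp [hfdef, norm_mul]
      _ ≤ 1 * 1 * ‖c‖ := by gcongr
      _ = ‖c‖ := by ring
  · push_neg at ha
    apply not_dense_of_tendsto' f
    have hL : 0 < Real.log ‖a‖ := Real.log_pos ha
    have hcpos : 0 < ‖c‖ := norm_pos_iff.mpr hc
    have h1 : Tendsto (fun x : ℝ => Real.exp x / x) atTop atTop := by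
      simpa using Real.tendsto_exp_div_pow_atTop 1
    have h2 : Tendsto (fun n : ℕ => (n : ℝ) * Real.log ‖a‖) atTop atTop :=
      Tendsto.atTop_mul_const hL tendsto_natCast_atTop_atTop
    have h3 : Tendsto (fun n : ℕ =>
        Real.log ‖a‖ * (Real.exp ((n:ℝ) * Real.log ‖a‖) / ((n:ℝ) * Real.log ‖a‖)) * ‖c‖)
        atTop atTop :=
      Tendsto.atTop_mul_const hcpos (Tendsto.const_mul_atTop hL (h1.comp h2))
    apply h3.congr'
    filter_upwards [eventually_ge_atTop 1] with n hn
    have hn0 : (0:ℝ) < (n:ℝ) := by exact_mod_cast hn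
    have hexp : Real.exp ((n:ℝ) * Real.log ‖a‖) = ‖a‖ ^ n := by
      rw [Real.exp_nat_mul, Real.exp_log (lt_trans one_pos ha)]
    have hcalc : Real.log ‖a‖ * (‖a‖ ^ n / ((n:ℝ) * Real.log ‖a‖)) = (n:ℝ)⁻¹ * ‖a‖ ^ n := by
      rw [mul_comm ((n:ℝ)) (Real.log ‖a‖), ← div_div, mul_div_assoc']
      rw [mul_div_assoc', mul_comm (Real.log ‖a‖) (‖a‖ ^ n), mul_div_assoc, div_self hL.ne',
        mul_one, div_eq_inv_mul]
    have hfn : ‖f n‖ = (n:ℝ)⁻¹ * ‖a‖ ^ n * ‖c‖ := by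
      simp [hfdef, norm_mul, norm_inv, norm_pow, Complex.norm_natCast]
    rw [hfn, hexp, hcalc]

variable {H' : Type*} [NormedAddCommGroup H'] [InnerProductSpace ℂ H'] [CompleteSpace H']

private lemma ker_adjoint_sub_eq_bot' (T : H' →L[ℂ] H') (hT : CesaroHypercyclic T) (μ : ℂ) :
    LinearMap.ker ((ContinuousLinearMap.adjoint T - μ • 1 : H' →L[ℂ] H') : H' →ₗ[ℂ] H') = ⊥ := by
  obtain ⟨x, hx⟩ := hT
  by_contra h
  obtain ⟨g, hg_mem, hg0⟩ := Submodule.ne_bot_iff _ |>.mp h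
  have hTg : ContinuousLinearMap.adjoint T g = μ • g := by
    have h1 := LinearMap.mem_ker.mp hg_mem
    have h2 : ContinuousLinearMap.adjoint T g - μ • g = 0 := by
      simpa [ContinuousLinearMap.sub_apply, ContinuousLinearMap.smul_apply,
        ContinuousLinearMap.one_apply] using h1
    exact sub_eq_zero.mp h2
  have hpow : ∀ n : ℕ, ((ContinuousLinearMap.adjoint T) ^ n) g = μ ^ n • g := by
    intro n
    induction n with
    | zero => simp
    | succ n ih =>
      rw [pow_succ, ContinuousLinearMap.mul_apply, hTg, map_smul, ih, smul_smul, pow_succ]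
      ring_nf
  set φ : H' →L[ℂ] ℂ := innerSL ℂ g with hφ
  have hφsurj : Function.Surjective φ := by
    intro z
    refine ⟨(z / ((‖g‖ : ℂ) ^ 2)) • g, ?_⟩
    have hg2 : ((‖g‖ : ℂ)) ^ 2 ≠ 0 := by
      simp [norm_eq_zero, hg0]
    rw [hφ]
    simp only [innerSL_apply_apply, inner_smul_right, inner_self_eq_norm_sq_to_K]
    field_simp
    exact mul_div_cancel_right₀ z hg2
  set S := {y : H' | ∃ n : ℕ, 1 ≤ n ∧ y = ((n : ℂ))⁻¹ • (T ^ n) x} with hSdef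
  have hdense : Dense (φ '' S) := by
    rw [dense_iff_closure_eq, Set.eq_univ_iff_forall]
    intro z
    obtain ⟨y, rfl⟩ := hφsurj z
    exact image_closure_subset_closure_image φ.continuous ⟨y, hx y, rfl⟩
  have hsub : φ '' S ⊆
      {z : ℂ | ∃ n : ℕ, 1 ≤ n ∧ z = ((n : ℂ))⁻¹ * (starRingEnd ℂ μ) ^ n * (inner ℂ g x : ℂ)} := by
    rintro _ ⟨_, ⟨n, hn, rfl⟩, rfl⟩
    refine ⟨n, hn, ?_⟩
    have hadj : ContinuousLinearMap.adjoint (T ^ n) = (ContinuousLinearMap.adjoint T) ^ n := by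
      rw [← ContinuousLinearMap.star_eq_adjoint, ← ContinuousLinearMap.star_eq_adjoint, star_pow]
    have h2 : (inner ℂ g ((T ^ n) x) : ℂ) = inner ℂ (((ContinuousLinearMap.adjoint T) ^ n) g) x := by
      rw [← hadj, ContinuousLinearMap.adjoint_inner_left]
    rw [hφ]
    simp only [innerSL_apply_apply, inner_smul_right]
    rw [h2, hpow n, inner_smul_left, map_pow]
    ring
  exact not_dense_orbit' (starRingEnd ℂ μ) (inner ℂ g x) (Dense.mono hsub hdense)

private lemma ker_adjoint_eq_orth' (S : H' →L[ℂ] H') :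
    LinearMap.ker ((ContinuousLinearMap.adjoint S : H' →L[ℂ] H') : H' →ₗ[ℂ] H') = (LinearMap.range (S : H' →ₗ[ℂ] H'))ᗮ := by
  ext g
  simp only [LinearMap.mem_ker, Submodule.mem_orthogonal, ContinuousLinearMap.coe_coe]
  constructor
  · rintro h _ ⟨y, rfl⟩
    rw [ContinuousLinearMap.coe_coe, ← ContinuousLinearMap.adjoint_inner_right, h, inner_zero_right]
  · intro h
    have h1 := h (S (ContinuousLinearMap.adjoint S g)) ⟨_, rfl⟩
    rw [← ContinuousLinearMap.adjoint_inner_right] at h1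
    exact inner_self_eq_zero.mp h1

private lemma adjoint_sub_smul' (T : H' →L[ℂ] H') (μ : ℂ) :
    ContinuousLinearMap.adjoint (T - μ • 1) =
      ContinuousLinearMap.adjoint T - (starRingEnd ℂ μ) • 1 := by
  rw [← ContinuousLinearMap.star_eq_adjoint, star_sub, star_smul, star_one,
    ContinuousLinearMap.star_eq_adjoint, starRingEnd_apply]

private lemma isBoundedBelow_of_bij' (S : H' →L[ℂ] H') (h1 : LinearMap.ker (S : H' →ₗ[ℂ] H') = ⊥)
    (h2 : LinearMap.range (S : H' →ₗ[ℂ] H') = ⊤) : IsBoundedBelow S := by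
  set e := ContinuousLinearEquiv.ofBijective S h1 h2 with he
  have hk := e.antilipschitz
  set K := ‖(e.symm : H' →L[ℂ] H')‖₊ with hK
  refine ⟨((K : ℝ) + 1)⁻¹, by positivity, fun x => ?_⟩
  have hx : ‖x‖ ≤ (K : ℝ) * ‖S x‖ := by
    have h3 := hk.le_mul_dist x 0
    simpa [dist_eq_norm, he, ContinuousLinearEquiv.coeFn_ofBijective] using h3
  have hx2 : ‖x‖ ≤ ((K : ℝ) + 1) * ‖S x‖ := by nlinarith [norm_nonneg (S x)]
  rw [inv_mul_le_iff₀ (by positivity)]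
  exact hx2

private lemma closed_range_of_bddBelow' (S : H' →L[ℂ] H') (h : IsBoundedBelow S) :
    IsClosed ((LinearMap.range (S : H' →ₗ[ℂ] H') : Submodule ℂ H') : Set H') ∧ LinearMap.ker (S : H' →ₗ[ℂ] H') = ⊥ := by
  obtain ⟨c, hc, hS⟩ := h
  have anti : AntilipschitzWith (⟨c, hc.le⟩ : NNReal)⁻¹ S := by
    apply ContinuousLinearMap.antilipschitz_of_bound
    intro x
    show ‖x‖ ≤ c⁻¹ * ‖S x‖
    rw [le_inv_mul_iff₀ hc]
    exact hS x
  constructor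
  · have h1 := anti.isClosed_range S.uniformContinuous
    have h2 : (LinearMap.range (S : H' →ₗ[ℂ] H') : Set H') = Set.range S := by
      ext y; simp [LinearMap.mem_range]
    rwa [h2]
  · exact LinearMap.ker_eq_bot_of_injective anti.injective

private lemma key_surj' (T : H' →L[ℂ] H')
    (hker : ∀ μ : ℂ, LinearMap.ker ((ContinuousLinearMap.adjoint T - μ • 1 : H' →L[ℂ] H') : H' →ₗ[ℂ] H') = ⊥)
    (lam : ℂ) (hcl : IsClosed ((LinearMap.range ((T - lam • 1 : H' →L[ℂ] H') : H' →ₗ[ℂ] H') : Submodule ℂ H') : Set H')) :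
    LinearMap.range ((T - lam • 1 : H' →L[ℂ] H') : H' →ₗ[ℂ] H') = ⊤ := by
  haveI : CompleteSpace (LinearMap.range ((T - lam • 1 : H' →L[ℂ] H') : H' →ₗ[ℂ] H')) := hcl.completeSpace_coe
  rw [← Submodule.orthogonal_eq_bot_iff, ← ker_adjoint_eq_orth', adjoint_sub_smul']
  exact hker _

private lemma spectrum_eq_approx' (T : H' →L[ℂ] H')
    (hker : ∀ μ : ℂ, LinearMap.ker ((ContinuousLinearMap.adjoint T - μ • 1 : H' →L[ℂ] H') : H' →ₗ[ℂ] H') = ⊥) :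
    spectrum ℂ T = approxSpectrum T := by
  ext lam
  rw [spectrum.mem_iff, approxSpectrum, Set.mem_setOf_eq]
  constructor
  · intro h hb
    apply h
    obtain ⟨hcl, hker0⟩ := closed_range_of_bddBelow' _ hb
    have hrange := key_surj' T hker lam hcl
    set e := ContinuousLinearEquiv.ofBijective (T - lam • 1) hker0 hrange with he
    have hS : IsUnit (T - lam • 1) := by
      refine ⟨⟨T - lam • 1, (e.symm : H' →L[ℂ] H'), ?_, ?_⟩, rfl⟩
      · ext x
        show (T - lam • 1) (e.symm x) = x
        exact ContinuousLinearEquiv.ofBijective_apply_symm_apply _ hker0 hrange x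
      · ext x
        show e.symm ((T - lam • 1) x) = x
        exact ContinuousLinearEquiv.ofBijective_symm_apply_apply _ hker0 hrange x
    have heq : (algebraMap ℂ (H' →L[ℂ] H')) lam - T = -(T - lam • 1) := by
      rw [Algebra.algebraMap_eq_smul_one, neg_sub]
    rw [heq]
    exact hS.neg
  · intro h hu
    apply h
    have hv : IsUnit (T - lam • 1) := by
      have h2 : T - lam • 1 = -((algebraMap ℂ (H' →L[ℂ] H')) lam - T) := by
        rw [Algebra.algebraMap_eq_smul_one, neg_sub]
      rw [h2]
      exact hu.neg
    obtain ⟨u, huv⟩ := hv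
    have hVS : (↑u⁻¹ : H' →L[ℂ] H') * (T - lam • 1) = 1 := by
      rw [← huv]; exact u.inv_mul
    refine ⟨(‖(↑u⁻¹ : H' →L[ℂ] H')‖ + 1)⁻¹, by positivity, fun x => ?_⟩
    have hx : (↑u⁻¹ : H' →L[ℂ] H') ((T - lam • 1) x) = x := by
      have := congrArg (fun A : H' →L[ℂ] H' => A x) hVS
      simpa [ContinuousLinearMap.mul_apply] using this
    have h3 : ‖x‖ ≤ (‖(↑u⁻¹ : H' →L[ℂ] H')‖ + 1) * ‖(T - lam • 1) x‖ := by
      calc ‖x‖ = ‖(↑u⁻¹ : H' →L[ℂ] H') ((T - lam • 1) x)‖ := by rw [hx]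
        _ ≤ ‖(↑u⁻¹ : H' →L[ℂ] H')‖ * ‖(T - lam • 1) x‖ := ContinuousLinearMap.le_opNorm _ _
        _ ≤ (‖(↑u⁻¹ : H' →L[ℂ] H')‖ + 1) * ‖(T - lam • 1) x‖ := by
            nlinarith [norm_nonneg ((T - lam • 1) x)]
    rw [inv_mul_le_iff₀ (by positivity)]
    exact h3

end AuxCesaro

variable {H : Type*} [NormedAddCommGroup H] [InnerProductSpace ℂ H] [CompleteSpace H]
  [TopologicalSpace.SeparableSpace H]

theorem cesaroHypercyclic_aWeylsTheorem_of_pi00_subset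
    (hinf : ¬ FiniteDimensional ℂ H) (T : H →L[ℂ] H) (hT : CesaroHypercyclic T)
    (hpi : pi00 T ⊆ pi00 (ContinuousLinearMap.adjoint T)) :
    approxSpectrum T \ essApproxSpectrum T = pi00a T := by
  have hker : ∀ μ : ℂ, LinearMap.ker ((ContinuousLinearMap.adjoint T - μ • 1 : H →L[ℂ] H) : H →ₗ[ℂ] H) = ⊥ :=
    ker_adjoint_sub_eq_bot' T hT
  have hσ : spectrum ℂ T = approxSpectrum T := spectrum_eq_approx' T hker
  have hL : approxSpectrum T \ essApproxSpectrum T = ∅ := by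
    rw [Set.eq_empty_iff_forall_notMem]
    rintro lam ⟨hla, hlea⟩
    rw [essApproxSpectrum, Set.mem_setOf_eq, not_not] at hlea
    obtain ⟨⟨hcl, _⟩, hidx⟩ := hlea
    have hrange := key_surj' T hker lam hcl
    have hqsub : Subsingleton (H ⧸ LinearMap.range ((T - lam • 1 : H →L[ℂ] H) : H →ₗ[ℂ] H)) :=
      Submodule.Quotient.subsingleton_iff.mpr hrange
    have hq0 : Module.rank ℂ (H ⧸ LinearMap.range ((T - lam • 1 : H →L[ℂ] H) : H →ₗ[ℂ] H)) = 0 :=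
      rank_zero_iff.mpr hqsub
    have hk0 : Module.rank ℂ (LinearMap.ker ((T - lam • 1 : H →L[ℂ] H) : H →ₗ[ℂ] H)) = 0 :=
      le_antisymm (hq0 ▸ hidx) (zero_le)
    have hksub : Subsingleton (LinearMap.ker ((T - lam • 1 : H →L[ℂ] H) : H →ₗ[ℂ] H)) := rank_zero_iff.mp hk0
    have hker0 : LinearMap.ker ((T - lam • 1 : H →L[ℂ] H) : H →ₗ[ℂ] H) = ⊥ := by
      rw [Submodule.eq_bot_iff]
      intro y hy
      have : (⟨y, hy⟩ : LinearMap.ker ((T - lam • 1 : H →L[ℂ] H) : H →ₗ[ℂ] H)) = 0 := Subsingleton.elim _ _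
      simpa using congrArg Subtype.val this
    exact hla (isBoundedBelow_of_bij' _ hker0 hrange)
  have hpa : pi00a T = pi00 T := by
    unfold pi00a pi00
    rw [← hσ]
  have hR : pi00a T = ∅ := by
    rw [hpa, Set.eq_empty_iff_forall_notMem]
    intro lam hlam
    exact (hpi hlam).2.1 (hker lam)
  rw [hL, hR]
end
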